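/- Let M : ℝ × ℝ≥0 → ℝ satisfy 2M(x,y) ≥ M(x+a, √(a²+(y+b)²)) + M(x-a, √(a²+(y-b)²)) for all x, a, b ∈ ℝ and y ≥ 0, and suppose y ↦ M(x,y) is nonincreasing on [0,∞) for each x. Then for every N ≥ 1, every x, a ∈ ℝ and every y, b ∈ ℝ^N, one has (1/2)(M(x+a, √(a²+‖y+b‖²)) + M(x-a, √(a²+‖y-b‖²))) ≤ M(x, ‖y‖). -/
import Mathlib


theorem stmt12 (M : ℝ → ℝ → ℝ)
    (hmain : ∀ x a b y : ℝ, 0 ≤ y →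
      2 * M x y ≥
        M (x + a) (Real.sqrt (a ^ 2 + (y + b) ^ 2)) +
          M (x - a) (Real.sqrt (a ^ 2 + (y - b) ^ 2)))
    (hmono : ∀ x y₁ y₂ : ℝ, 0 ≤ y₁ → y₁ ≤ y₂ → M x y₂ ≤ M x y₁)
    (N : ℕ) (hN : 1 ≤ N) (x a : ℝ) (y b : EuclideanSpace ℝ (Fin N)) :
    (1 / 2) * (M (x + a) (Real.sqrt (a ^ 2 + ‖y + b‖ ^ 2)) +
        M (x - a) (Real.sqrt (a ^ 2 + ‖y - b‖ ^ 2))) ≤ M x ‖y‖ := by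
  set s : ℝ := (‖y + b‖ + ‖y - b‖) / 2 with hs
  set t : ℝ := (‖y + b‖ - ‖y - b‖) / 2 with ht
  have hs0 : 0 ≤ s := by positivity
  have hst1 : s + t = ‖y + b‖ := by ring
  have hst2 : s - t = ‖y - b‖ := by ring
  have hys : ‖y‖ ≤ s := by
    have h1 : ‖(y + b) + (y - b)‖ ≤ ‖y + b‖ + ‖y - b‖ := norm_add_le _ _
    have h2 : (y + b) + (y - b) = y + y := by abel
    have h3 : ‖y + y‖ = 2 * ‖y‖ := by
      rw [← two_smul ℝ y, norm_smul]; simp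
    rw [h2, h3] at h1
    linarith
  have hm := hmain x a t s hs0
  rw [hst1, hst2] at hm
  have hmm := hmono x ‖y‖ s (norm_nonneg y) hys
  linarith
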